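/- Let g(q) = ((1/q − 1)D² + V²)^{2/(1−2ε)} (C_det + C_rnd q) for q ∈ (0,1], with D², V², C_det, C_rnd > 0 and 0 < ε < 1/2. Then the derivative of g at q = 1 is positive if and only if D² < (C_rnd/((2/(1−2ε))(C_det + C_rnd))) V². -/

import Mathlib

/-- The derivative at q = 1 of the expected wall-clock time
g(q) = ((1/q − 1)D² + V²)^{2/(1−2ε)} (C_det + C_rnd q) is positive iff
D² < (C_rnd/((2/(1−2ε))(C_det + C_rnd))) V². -/
theorem ufom_time_derivative_at_one (Cdet Crnd V2 D2 ε : ℝ)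
    (hCdet : 0 < Cdet) (hCrnd : 0 < Crnd) (hV : 0 < V2) (hD : 0 < D2)
    (hε0 : 0 < ε) (hε1 : ε < 1 / 2)
    (g : ℝ → ℝ)
    (hg : g = fun q =>
      ((1 / q - 1) * D2 + V2) ^ ((2 : ℝ) / (1 - 2 * ε)) * (Cdet + Crnd * q)) :
    0 < deriv g 1 ↔ D2 < (Crnd / ((2 / (1 - 2 * ε)) * (Cdet + Crnd))) * V2 := by
  set α : ℝ := 2 / (1 - 2 * ε) with hα
  have h2ε : 0 < 1 - 2 * ε := by linarith
  have hαpos : 0 < α := by positivity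
  -- derivative of inner function at 1
  have hh : HasDerivAt (fun q : ℝ => (1 / q - 1) * D2 + V2) (-D2) 1 := by
    have h1 : HasDerivAt (fun q : ℝ => 1 / q) (-1) 1 := by
      simpa using (hasDerivAt_inv (one_ne_zero)).congr_deriv (by norm_num)
    have := ((h1.sub_const 1).mul_const D2).add_const V2
    simpa using this
  have hval : (1 / (1:ℝ) - 1) * D2 + V2 = V2 := by norm_num
  have hpow : HasDerivAt (fun q : ℝ => ((1 / q - 1) * D2 + V2) ^ α)
      (-D2 * α * V2 ^ (α - 1)) 1 := by
    have := hh.rpow_const (p := α) (Or.inl (by rw [hval]; exact hV.ne'))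
    simpa [hval] using this
  have hlin : HasDerivAt (fun q : ℝ => Cdet + Crnd * q) Crnd 1 := by
    simpa using ((hasDerivAt_id (1:ℝ)).const_mul Crnd).const_add Cdet
  have hg1 : HasDerivAt g
      (-D2 * α * V2 ^ (α - 1) * (Cdet + Crnd * 1) + V2 ^ α * Crnd) 1 := by
    rw [hg]
    simpa [hval] using hpow.fun_mul hlin
  rw [hg1.deriv]
  have hVpow : (0:ℝ) < V2 ^ (α - 1) := Real.rpow_pos_of_pos hV _
  have hsplit : V2 ^ α = V2 ^ (α - 1) * V2 := by
    rw [← Real.rpow_add_one hV.ne' (α - 1)]; ring_nf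
  rw [hsplit]
  have key : -D2 * α * V2 ^ (α - 1) * (Cdet + Crnd * 1) + V2 ^ (α - 1) * V2 * Crnd
      = V2 ^ (α - 1) * (Crnd * V2 - α * D2 * (Cdet + Crnd)) := by ring
  rw [key]
  rw [mul_pos_iff_of_pos_left hVpow, sub_pos]
  have hden : 0 < α * (Cdet + Crnd) := by positivity
  have hiff : D2 < Crnd / (α * (Cdet + Crnd)) * V2 ↔
      D2 * (α * (Cdet + Crnd)) < Crnd * V2 := by
    rw [div_mul_eq_mul_div Crnd (α * (Cdet + Crnd)) V2, lt_div_iff₀ hden]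
  rw [hiff]
  constructor <;> intro h <;> nlinarith
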